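/- Work over F_2 and fix d ≥ 3. Let M(d)_d = F_2[S_d] (the regular representation, with basis the bijections f : {1,...,d} → {1,...,d}), let K ⊆ M(d)_d be the subspace spanned by the element Σ_{f ∈ S_d} f, and let W = M(d)_d / K. Then the space of S_d-invariants W^{S_d} is one-dimensional, spanned by the image of Σ_{f ∈ A_d} f, where A_d is the alternating group. -/

import Mathlib

open Equiv

/-- The sum of all group elements in `F₂[S_d]`. -/
noncomputable def allSum (d : ℕ) : MonoidAlgebra (ZMod 2) (Equiv.Perm (Fin d)) :=
  ∑ f : Equiv.Perm (Fin d), MonoidAlgebra.single f (1 : ZMod 2)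

/-- The sum of all even permutations in `F₂[S_d]`. -/
noncomputable def altSum (d : ℕ) : MonoidAlgebra (ZMod 2) (Equiv.Perm (Fin d)) :=
  ∑ f ∈ @Finset.filter _ (fun f => f ∈ alternatingGroup (Fin d)) (Classical.decPred _)
      Finset.univ,
    MonoidAlgebra.single f (1 : ZMod 2)

noncomputable instance {R G : Type*} [Semiring R] :
    CoeFun (MonoidAlgebra R G) (fun _ => G → R) := ⟨fun x => x.coeff⟩

lemma allSum_apply (d : ℕ) (g : Equiv.Perm (Fin d)) : allSum d g = 1 := by
  classical
  rw [allSum, MonoidAlgebra.coeff_sum, Finsupp.finset_sum_apply]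
  simp [Finsupp.single_apply]

open scoped Classical in
lemma altSum_apply (d : ℕ) (g : Equiv.Perm (Fin d)) :
    altSum d g = if g ∈ alternatingGroup (Fin d) then 1 else 0 := by
  classical
  rw [altSum, MonoidAlgebra.coeff_sum, Finsupp.finset_sum_apply]
  rw [Finset.sum_congr rfl (fun f _ => MonoidAlgebra.single_apply)]
  rw [Finset.sum_ite_eq']
  simp

lemma two_cases (c : ZMod 2) : c = 0 ∨ c = 1 := by revert c; decide

lemma zmod2_add_self (a : ZMod 2) : a + a = 0 := by revert a; decide

/-- For `d ≥ 3` and `W = F₂[S_d] / ⟨∑_{f ∈ S_d} f⟩`, with `S_d` acting by left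
multiplication (descended to the quotient as `lmul`), the invariant space `W^{S_d}` is
one-dimensional, spanned by the image of `∑_{f ∈ A_d} f`. -/
theorem invariants_regular_mod_allSum (d : ℕ) (hd : 3 ≤ d)
    (K : Submodule (ZMod 2) (MonoidAlgebra (ZMod 2) (Equiv.Perm (Fin d))))
    (hK : K = Submodule.span (ZMod 2) {allSum d})
    (lmul : Equiv.Perm (Fin d) →
      (MonoidAlgebra (ZMod 2) (Equiv.Perm (Fin d)) ⧸ K) →ₗ[ZMod 2]
        (MonoidAlgebra (ZMod 2) (Equiv.Perm (Fin d)) ⧸ K))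
    (hlmul : ∀ σ x, lmul σ (Submodule.Quotient.mk x)
        = Submodule.Quotient.mk (MonoidAlgebra.single σ (1 : ZMod 2) * x)) :
    (Submodule.Quotient.mk (p := K) (altSum d) ≠ 0) ∧
    (∀ x, (∀ σ, lmul σ x = x) ↔
      (x = 0 ∨ x = Submodule.Quotient.mk (p := K) (altSum d))) := by
  classical
  have memK : ∀ z, z ∈ K ↔ z = 0 ∨ z = allSum d := by
    intro z
    rw [hK, Submodule.mem_span_singleton]
    constructor
    · rintro ⟨c, rfl⟩
      rcases two_cases c with rfl | rfl
      · left; simp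
      · right; simp
    · rintro (rfl | rfl)
      · exact ⟨0, by simp⟩
      · exact ⟨1, by simp⟩
  -- the transposition t
  have h0 : (0:ℕ) < d := by omega
  have h1 : (1:ℕ) < d := by omega
  set a : Fin d := ⟨0, h0⟩ with ha
  set b : Fin d := ⟨1, h1⟩ with hb
  have hab : a ≠ b := by simp [ha, hb, Fin.ext_iff]
  set t : Perm (Fin d) := Equiv.swap a b with htdef
  have hts : Equiv.Perm.sign t = -1 := Equiv.Perm.sign_swap hab
  have ht : t ∉ alternatingGroup (Fin d) := by
    rw [Equiv.Perm.mem_alternatingGroup, hts]; decide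
  have hAmem : ∀ u : Perm (Fin d), u ∈ alternatingGroup (Fin d) ↔ Equiv.Perm.sign u = 1 :=
    fun u => Equiv.Perm.mem_alternatingGroup
  -- altSum is neither 0 nor allSum
  have haltne0 : altSum d ≠ 0 := by
    intro h
    have h2 : altSum d 1 = (0 : MonoidAlgebra (ZMod 2) (Equiv.Perm (Fin d))) 1 := by rw [h]
    rw [altSum_apply, if_pos (one_mem (alternatingGroup (Fin d))), MonoidAlgebra.coeff_zero, Finsupp.zero_apply] at h2
    exact one_ne_zero h2
  have haltneall : altSum d ≠ allSum d := by
    intro h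
    have h2 : altSum d t = allSum d t := by rw [h]
    rw [altSum_apply, allSum_apply, if_neg ht] at h2
    exact zero_ne_one h2
  constructor
  · rw [Ne, Submodule.Quotient.mk_eq_zero, memK]
    rintro (h | h)
    · exact haltne0 h
    · exact haltneall h
  intro x
  constructor
  · -- forward direction
    intro hx
    obtain ⟨y, rfl⟩ := Submodule.Quotient.mk_surjective K x
    have hdiff : ∀ σ : Perm (Fin d),
        (∀ g, y (σ⁻¹ * g) = y g) ∨ (∀ g, y (σ⁻¹ * g) = y g + 1) := by
      intro σ
      have hmk : (Submodule.Quotient.mk (p := K) (MonoidAlgebra.single σ (1:ZMod 2) * y))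
          = Submodule.Quotient.mk y := by rw [← hlmul]; exact hx σ
      have h := (Submodule.Quotient.eq K).1 hmk
      rcases (memK _).1 h with h0 | h1
      · left; intro g
        have hg : (MonoidAlgebra.single σ (1:ZMod 2) * y - y) g = 0 := by rw [h0]; rfl
        rw [MonoidAlgebra.coeff_sub, Finsupp.sub_apply, MonoidAlgebra.single_mul_apply, one_mul, sub_eq_zero] at hg
        exact hg
      · right; intro g
        have hg : (MonoidAlgebra.single σ (1:ZMod 2) * y - y) g = allSum d g := by rw [h1]
        rw [MonoidAlgebra.coeff_sub, Finsupp.sub_apply, MonoidAlgebra.single_mul_apply, one_mul, allSum_apply,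
          sub_eq_iff_eq_add] at hg
        rw [hg, add_comm]
    set ε : Perm (Fin d) → ZMod 2 := fun σ => y σ⁻¹ - y 1 with hε
    have hsh : ∀ σ g, y (σ⁻¹ * g) = y g + ε σ := by
      intro σ g
      rcases hdiff σ with h | h
      · have h1 : ε σ = 0 := by
          have h2 := h 1; rw [mul_one] at h2
          simp [hε, h2]
        rw [h, h1, add_zero]
      · have h1 : ε σ = 1 := by
          have h2 := h 1; rw [mul_one] at h2
          simp [hε, h2]
        rw [h, h1]
    have hone : ε 1 = 0 := by simp [hε]
    have hmul : ∀ σ τ, ε (σ * τ) = ε σ + ε τ := by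
      intro σ τ
      have h := hsh τ σ⁻¹
      simp only [hε, mul_inv_rev]
      rw [h]
      ring
    have hinv : ∀ σ, ε σ⁻¹ = ε σ := by
      intro σ
      have h : ε σ + ε σ⁻¹ = 0 := by rw [← hmul, mul_inv_cancel, hone]
      have : ∀ u v : ZMod 2, u + v = 0 → v = u := by decide
      exact this _ _ h
    have heven : ∀ σ ∈ alternatingGroup (Fin d), ε σ = 0 := by
      intro σ hσ
      rw [← Equiv.Perm.closure_three_cycles_eq_alternating] at hσ
      refine Subgroup.closure_induction ?_ hone ?_ ?_ hσ
      · intro c hc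
        have h3 : c * (c * c) = 1 := by
          have := pow_orderOf_eq_one c
          rw [Equiv.Perm.IsThreeCycle.orderOf hc] at this
          rw [← this]; simp [pow_succ, mul_assoc]
        have := hmul c (c * c)
        rw [h3, hone, hmul, ← add_assoc] at this
        rw [zmod2_add_self, zero_add] at this
        exact this.symm
      · intro u v _ _ hu hv
        rw [hmul, hu, hv, add_zero]
      · intro u _ hu
        rw [hinv, hu]
    have hodd : ∀ σ, σ ∉ alternatingGroup (Fin d) → ε σ = ε t := by
      intro σ hσ
      have hσs : Equiv.Perm.sign σ = -1 := by
        rcases Int.units_eq_one_or (Equiv.Perm.sign σ) with h | h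
        · exact absurd ((hAmem σ).2 h) hσ
        · exact h
      have hmemA : σ * t⁻¹ ∈ alternatingGroup (Fin d) := by
        rw [hAmem, map_mul, map_inv, hσs, hts]
        decide
      have : ε ((σ * t⁻¹) * t) = ε (σ * t⁻¹) + ε t := hmul _ _
      rw [inv_mul_cancel_right, heven _ hmemA, zero_add] at this
      exact this
    have hyval : ∀ g, y g = y 1 + ε g := by
      intro g
      have h := hsh g⁻¹ 1
      rw [inv_inv, mul_one, hinv] at h
      exact h
    rcases two_cases (ε t) with het | het
    · -- trivial character: x = 0
      left
      have hall : ∀ σ, ε σ = 0 := by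
        intro σ
        by_cases hσ : σ ∈ alternatingGroup (Fin d)
        · exact heven σ hσ
        · rw [hodd σ hσ, het]
      rw [Submodule.Quotient.mk_eq_zero, memK]
      rcases two_cases (y 1) with hy1 | hy1
      · left
        ext g
        rw [hyval g, hall, hy1, add_zero]
        rfl
      · right
        ext g
        rw [hyval g, hall, hy1, add_zero, allSum_apply]
    · -- sign character: x = mk altSum
      right
      have hall : ∀ σ, ε σ = if σ ∈ alternatingGroup (Fin d) then 0 else 1 := by
        intro σ
        by_cases hσ : σ ∈ alternatingGroup (Fin d)
        · rw [heven σ hσ, if_pos hσ]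
        · rw [hodd σ hσ, het, if_neg hσ]
      rcases two_cases (y 1) with hy1 | hy1
      · -- y = altSum + allSum
        rw [Submodule.Quotient.eq, memK]
        right
        ext g
        rw [MonoidAlgebra.coeff_sub, Finsupp.sub_apply, hyval g, hall, hy1, zero_add, altSum_apply, allSum_apply]
        by_cases hg : g ∈ alternatingGroup (Fin d)
        · rw [if_pos hg, if_pos hg]; decide
        · rw [if_neg hg, if_neg hg]; decide
      · -- y = altSum
        have : y = altSum d := by
          ext g
          rw [hyval g, hall, hy1, altSum_apply]
          by_cases hg : g ∈ alternatingGroup (Fin d)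
          · rw [if_pos hg, if_pos hg]; decide
          · rw [if_neg hg, if_neg hg]; decide
        rw [this]
  · -- backward direction
    rintro (rfl | rfl)
    · intro σ; exact map_zero (lmul σ)
    · intro σ
      rw [hlmul, Submodule.Quotient.eq, memK]
      by_cases hσ : σ ∈ alternatingGroup (Fin d)
      · left
        ext g
        rw [MonoidAlgebra.coeff_sub, Finsupp.sub_apply, MonoidAlgebra.single_mul_apply, one_mul, altSum_apply,
          altSum_apply]
        rw [Subgroup.mul_mem_cancel_left _ (inv_mem hσ)]
        rw [sub_self]
        rfl
      · right
        have hσs : Equiv.Perm.sign σ = -1 := by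
          rcases Int.units_eq_one_or (Equiv.Perm.sign σ) with h | h
          · exact absurd ((hAmem σ).2 h) hσ
          · exact h
        ext g
        rw [MonoidAlgebra.coeff_sub, Finsupp.sub_apply, MonoidAlgebra.single_mul_apply, one_mul, altSum_apply,
          altSum_apply, allSum_apply]
        have hsig : Equiv.Perm.sign (σ⁻¹ * g) = - Equiv.Perm.sign g := by
          rw [map_mul, map_inv, hσs]
          rw [show ((-1:ℤˣ))⁻¹ = -1 by decide, neg_one_mul]
        by_cases hg : g ∈ alternatingGroup (Fin d)
        · have h1 : σ⁻¹ * g ∉ alternatingGroup (Fin d) := by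
            rw [hAmem, hsig, (hAmem g).1 hg]; decide
          rw [if_pos hg, if_neg h1]; decide
        · have hgs : Equiv.Perm.sign g = -1 := by
            rcases Int.units_eq_one_or (Equiv.Perm.sign g) with h | h
            · exact absurd ((hAmem g).2 h) hg
            · exact h
          have h1 : σ⁻¹ * g ∈ alternatingGroup (Fin d) := by
            rw [hAmem, hsig, hgs]; decide
          rw [if_neg hg, if_pos h1]; decide
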